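/- Consider the residual-sketch iteration: given A ∈ ℝ^{m×n}, b ∈ ℝ^m, x₀ ∈ ℝ^n, set r₀ = b − A x₀ and for j ≥ 1 let S_j = [r₀ r₁ … r_{j−1}] ∈ ℝ^{m×j}, p_j = Aᵀ S_j (S_jᵀ A Aᵀ S_j)⁻¹ S_jᵀ r_{j−1}, x_j = x_{j−1} + p_j, r_j = b − A x_j. Assume the Gram matrices S_jᵀ A Aᵀ S_j are invertible for j = 1,…,k, where k ≥ 2. Set y_k = Aᵀ r_{k−1}, ρ = ‖r_{k−1}‖₂², θ = ‖p_{k−1}‖₂², φ = ‖y_k‖₂². Then θ φ − ρ² > 0 and p_k satisfies the one-step recursion p_k = β p_{k−1} + γ y_k with β = ρ² / (θ φ − ρ²) and γ = θ ρ / (θ φ − ρ²). -/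
import Mathlib
open Matrix

def colCat {m : ℕ} (r : ℕ → Fin m → ℝ) (k : ℕ) : Matrix (Fin m) (Fin k) ℝ :=
  Matrix.of fun i l => r l.val i

theorem sumdot {n : ℕ} {ι : Type*} (s : Finset ι) (f : ι → (Fin n → ℝ)) (w : Fin n → ℝ) :
    (∑ i ∈ s, f i) ⬝ᵥ w = ∑ i ∈ s, f i ⬝ᵥ w := by
  simp only [dotProduct, Finset.sum_apply, Finset.sum_mul]
  exact Finset.sum_comm

theorem dotsum {n : ℕ} {ι : Type*} (s : Finset ι) (f : ι → (Fin n → ℝ)) (w : Fin n → ℝ) :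
    w ⬝ᵥ (∑ i ∈ s, f i) = ∑ i ∈ s, w ⬝ᵥ f i := by
  rw [dotProduct_comm, sumdot]; simp [dotProduct_comm]

theorem dotselfpos {n : ℕ} {v : Fin n → ℝ} (hv : v ≠ 0) : 0 < v ⬝ᵥ v := by
  have h1 : 0 ≤ v ⬝ᵥ v := Finset.sum_nonneg fun i _ => mul_self_nonneg _
  rcases h1.lt_or_eq with h | h
  · exact h
  · exact absurd (dotProduct_self_eq_zero.mp h.symm) hv

theorem StmulVec {mm j : ℕ} (r : ℕ → Fin mm → ℝ) (v : Fin mm → ℝ) (i : Fin j) :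
    ((colCat r j)ᵀ *ᵥ v) i = r i.val ⬝ᵥ v := by
  simp [colCat, Matrix.mulVec, dotProduct, Matrix.transpose_apply]

theorem SmulVec {mm j : ℕ} (r : ℕ → Fin mm → ℝ) (z : Fin j → ℝ) :
    (colCat r j) *ᵥ z = ∑ l : Fin j, z l • r l.val := by
  funext i
  simp [colCat, Matrix.mulVec, dotProduct, Finset.sum_apply, mul_comm]

theorem stmt11 (m n k : ℕ) (hk : 2 ≤ k)
    (A : Matrix (Fin m) (Fin n) ℝ) (b : Fin m → ℝ)
    (x p : ℕ → Fin n → ℝ) (r : ℕ → Fin m → ℝ)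
    (hr : ∀ j, r j = b - A.mulVec (x j))
    (hinv : ∀ j, 1 ≤ j → j ≤ k → IsUnit ((colCat r j)ᵀ * A * Aᵀ * colCat r j))
    (hp : ∀ j, 1 ≤ j → j ≤ k →
      p j = (Aᵀ * colCat r j).mulVec
        (((colCat r j)ᵀ * A * Aᵀ * colCat r j)⁻¹.mulVec
          ((colCat r j)ᵀ.mulVec (r (j - 1)))))
    (hx : ∀ j, 1 ≤ j → j ≤ k → x j = x (j - 1) + p j)
    (y : Fin n → ℝ) (hy : y = Aᵀ.mulVec (r (k - 1)))
    (ρ θ φ : ℝ)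
    (hρ : ρ = r (k - 1) ⬝ᵥ r (k - 1))
    (hθ : θ = p (k - 1) ⬝ᵥ p (k - 1))
    (hφ : φ = y ⬝ᵥ y) :
    0 < θ * φ - ρ ^ 2 ∧
      p k = (ρ ^ 2 / (θ * φ - ρ ^ 2)) • p (k - 1) + (θ * ρ / (θ * φ - ρ ^ 2)) • y := by
  set a : ℕ → Fin n → ℝ := fun l => Aᵀ.mulVec (r l) with ha
  -- dot with A-image
  have dotA : ∀ (l : ℕ) (w : Fin n → ℝ), r l ⬝ᵥ A.mulVec w = a l ⬝ᵥ w := by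
    intro l w
    rw [Matrix.dotProduct_mulVec, ← Matrix.mulVec_transpose]
  -- L2: constraints
  have hcon : ∀ j, 1 ≤ j → j ≤ k → ∀ i, i < j → a i ⬝ᵥ p j = r i ⬝ᵥ r (j - 1) := by
    intro j h1 h2 i hi
    have hu := hinv j h1 h2
    have hGG : ((colCat r j)ᵀ * A * Aᵀ * colCat r j) * ((colCat r j)ᵀ * A * Aᵀ * colCat r j)⁻¹ = 1 :=
      Matrix.mul_nonsing_inv _ ((Matrix.isUnit_iff_isUnit_det _).mp hu)
    have key : (colCat r j)ᵀ *ᵥ (A *ᵥ p j) = (colCat r j)ᵀ *ᵥ r (j - 1) := by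
      rw [hp j h1 h2]
      simp only [Matrix.mulVec_mulVec]
      simp only [← Matrix.mul_assoc]
      rw [hGG, Matrix.one_mul]
    have hkey := congrArg (fun v => v ⟨i, hi⟩) key
    simp only [StmulVec] at hkey
    rw [← dotA]
    exact hkey
  -- L1: span
  have hspan : ∀ j, 1 ≤ j → j ≤ k → ∃ u : ℕ → ℝ,
      p j = ∑ l ∈ Finset.range j, u l • a l := by
    intro j h1 h2
    set z := ((colCat r j)ᵀ * A * Aᵀ * colCat r j)⁻¹ *ᵥ ((colCat r j)ᵀ *ᵥ r (j - 1)) with hz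
    refine ⟨fun l => if h : l < j then z ⟨l, h⟩ else 0, ?_⟩
    rw [hp j h1 h2, ← Matrix.mulVec_mulVec, SmulVec]
    have hstep : Aᵀ *ᵥ (∑ l : Fin j, z l • r l.val) = ∑ l : Fin j, z l • a l.val := by
      rw [← Matrix.mulVecLin_apply, map_sum]
      simp [Matrix.mulVecLin_apply, ha, Matrix.mulVec_transpose]
    rw [hstep, ← Fin.sum_univ_eq_sum_range (fun l => (if h : l < j then z ⟨l, h⟩ else 0) • a l) j]
    exact Finset.sum_congr rfl fun l _ => by simp [l.isLt]
  -- L0: residual update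
  have hres : ∀ j, 1 ≤ j → j ≤ k → r j = r (j - 1) - A.mulVec (p j) := by
    intro j h1 h2
    rw [hr j, hx j h1 h2, hr (j - 1), Matrix.mulVec_add, sub_add_eq_sub_sub]
  -- L3: orthogonality
  have horth : ∀ i j : ℕ, i < j → j ≤ k → r i ⬝ᵥ r j = 0 := by
    intro i j hij hjk
    have h1 : 1 ≤ j := by omega
    rw [hres j h1 hjk, dotProduct_sub, dotA, hcon j h1 hjk i hij, sub_self]
  -- L4: independence
  have hindep : ∀ c : ℕ → ℝ, (∑ l ∈ Finset.range k, c l • a l) = 0 → ∀ l, l < k → c l = 0 := by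
    intro c hc l hl
    have hu := hinv k (by omega) le_rfl
    have hGG : ((colCat r k)ᵀ * A * Aᵀ * colCat r k)⁻¹ * ((colCat r k)ᵀ * A * Aᵀ * colCat r k) = 1 :=
      Matrix.nonsing_inv_mul _ ((Matrix.isUnit_iff_isUnit_det _).mp hu)
    set cf : Fin k → ℝ := fun i => c i.val with hcf
    have h1 : (colCat r k) *ᵥ cf = ∑ l ∈ Finset.range k, c l • r l := by
      rw [SmulVec, ← Fin.sum_univ_eq_sum_range (fun l => c l • r l) k]
    have h2 : Aᵀ *ᵥ ((colCat r k) *ᵥ cf) = 0 := by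
      rw [h1, ← Matrix.mulVecLin_apply, map_sum]
      simpa [Matrix.mulVecLin_apply, ha, Matrix.mulVec_transpose] using hc
    have h3 : ((colCat r k)ᵀ * A * Aᵀ * colCat r k) *ᵥ cf = 0 := by
      simp only [← Matrix.mulVec_mulVec]
      rw [h2, Matrix.mulVec_zero, Matrix.mulVec_zero]
    have h4 : cf = 0 := by
      calc cf = 1 *ᵥ cf := (Matrix.one_mulVec cf).symm
        _ = (((colCat r k)ᵀ * A * Aᵀ * colCat r k)⁻¹ * ((colCat r k)ᵀ * A * Aᵀ * colCat r k)) *ᵥ cf := by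
            rw [hGG]
        _ = ((colCat r k)ᵀ * A * Aᵀ * colCat r k)⁻¹ *ᵥ (((colCat r k)ᵀ * A * Aᵀ * colCat r k) *ᵥ cf) := by
            rw [Matrix.mulVec_mulVec]
        _ = 0 := by rw [h3, Matrix.mulVec_zero]
    have h5 := congrFun h4 ⟨l, hl⟩
    simpa [hcf] using h5
  -- nonzero a's and residual norms
  have hane : ∀ l, l < k → a l ≠ 0 := by
    intro l hl hla
    have := hindep (fun i => if i = l then 1 else 0) ?_ l hl
    · simp at this
    · simp [ite_smul, Finset.sum_ite_eq', Finset.mem_range, hl, hla]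
  have hrpos : ∀ l, l < k → 0 < r l ⬝ᵥ r l := by
    intro l hl
    apply dotselfpos
    intro h0
    exact hane l hl (by rw [ha]; simp [h0])
  -- index facts
  have hk1 : (1:ℕ) ≤ k - 1 := by omega
  have hk1k : k - 1 ≤ k := by omega
  have hk2 : k - 1 - 1 = k - 2 := by omega
  have hconk1 : ∀ i, i < k - 1 → a i ⬝ᵥ p (k - 1) = r i ⬝ᵥ r (k - 2) := by
    intro i hi
    have h := hcon (k - 1) hk1 hk1k i hi
    rwa [hk2] at h
  have hApk1 : A *ᵥ p (k - 1) = r (k - 2) - r (k - 1) := by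
    have h := hres (k - 1) hk1 hk1k
    rw [hk2] at h
    rw [h]; abel
  have hyp1 : a (k - 1) ⬝ᵥ p (k - 1) = -ρ := by
    have e1 : r (k - 1) ⬝ᵥ r (k - 2) = 0 := by
      rw [dotProduct_comm]; exact horth (k - 2) (k - 1) (by omega) hk1k
    rw [← dotA, hApk1, dotProduct_sub, e1, hρ, zero_sub]
  have hρ'pos : 0 < r (k - 2) ⬝ᵥ r (k - 2) := hrpos (k - 2) (by omega)
  have hρpos : 0 < ρ := hρ ▸ hrpos (k - 1) (by omega)
  have hppos : ∀ j, 1 ≤ j → j ≤ k → 0 < p j ⬝ᵥ p j := by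
    intro j h1 h2
    apply dotselfpos; intro h0
    have h := hcon j h1 h2 (j - 1) (by omega)
    rw [h0, dotProduct_zero] at h
    exact (hrpos (j - 1) (by omega)).ne' h.symm
  have hθpos : 0 < θ := hθ ▸ hppos (k - 1) hk1 hk1k
  -- u-last identity
  have hulast : ∀ j, 1 ≤ j → j ≤ k → ∀ u : ℕ → ℝ, p j = ∑ l ∈ Finset.range j, u l • a l →
      p j ⬝ᵥ p j = u (j - 1) * (r (j - 1) ⬝ᵥ r (j - 1)) := by
    intro j h1 h2 u hu
    have expand : p j ⬝ᵥ p j = ∑ l ∈ Finset.range j, u l * (a l ⬝ᵥ p j) := by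
      nth_rewrite 1 [hu]
      rw [sumdot]
      exact Finset.sum_congr rfl fun l _ => by
        rw [smul_dotProduct, smul_eq_mul]
    rw [expand]
    have hterm : ∀ l ∈ Finset.range j, u l * (a l ⬝ᵥ p j) =
        if l = j - 1 then u (j - 1) * (r (j - 1) ⬝ᵥ r (j - 1)) else 0 := by
      intro l hl
      rw [Finset.mem_range] at hl
      rw [hcon j h1 h2 l hl]
      by_cases hlj : l = j - 1
      · rw [if_pos hlj, hlj]
      · rw [if_neg hlj, horth l (j - 1) (by omega) (by omega), mul_zero]
    rw [Finset.sum_congr rfl hterm, Finset.sum_ite_eq' (Finset.range j) (j - 1),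
      if_pos (Finset.mem_range.mpr (by omega))]
  -- t-values vanish early
  have ht0 : ∀ l, l + 3 ≤ k → a (k - 1) ⬝ᵥ a l = 0 := by
    intro l
    induction l using Nat.strong_induction_on with
    | _ l IH =>
      intro hl
      obtain ⟨u, hu⟩ := hspan (l + 1) (by omega) (by omega)
      have hA : A *ᵥ p (l + 1) = r l - r (l + 1) := by
        have h := hres (l + 1) (by omega) (by omega)
        simp only [Nat.add_sub_cancel] at h
        rw [h]; abel
      have hypl : a (k - 1) ⬝ᵥ p (l + 1) = 0 := by
        rw [← dotA, hA, dotProduct_sub,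
          dotProduct_comm (r (k - 1)) (r l), dotProduct_comm (r (k - 1)) (r (l + 1)),
          horth l (k - 1) (by omega) (by omega), horth (l + 1) (k - 1) (by omega) (by omega),
          sub_zero]
      have hexp : a (k - 1) ⬝ᵥ p (l + 1) = ∑ i ∈ Finset.range (l + 1), u i * (a (k - 1) ⬝ᵥ a i) := by
        conv_lhs => rw [hu]
        rw [dotsum]
        exact Finset.sum_congr rfl fun i _ => by
          rw [dotProduct_smul, smul_eq_mul]
      rw [Finset.sum_range_succ] at hexp
      have hzero : ∑ i ∈ Finset.range l, u i * (a (k - 1) ⬝ᵥ a i) = 0 :=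
        Finset.sum_eq_zero fun i hi => by
          rw [IH i (Finset.mem_range.mp hi) (by
            have := Finset.mem_range.mp hi; omega), mul_zero]
      have hune : u l ≠ 0 := by
        have h5 := hulast (l + 1) (by omega) (by omega) u hu
        simp only [Nat.add_sub_cancel] at h5
        have h6 := hppos (l + 1) (by omega) (by omega)
        intro h0; rw [h0, zero_mul] at h5; exact h6.ne' h5
      have h7 : u l * (a (k - 1) ⬝ᵥ a l) = 0 := by
        rw [hypl, hzero, zero_add] at hexp; exact hexp.symm
      exact (mul_eq_zero.mp h7).resolve_left hune
  -- the (k-2) t-value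
  have htk2 : θ * (a (k - 1) ⬝ᵥ a (k - 2)) = -(ρ * (r (k - 2) ⬝ᵥ r (k - 2))) := by
    obtain ⟨u, hu⟩ := hspan (k - 1) hk1 hk1k
    have hθu : θ = u (k - 2) * (r (k - 2) ⬝ᵥ r (k - 2)) := by
      rw [hθ, hulast (k - 1) hk1 hk1k u hu, hk2]
    have hexp : a (k - 1) ⬝ᵥ p (k - 1) = ∑ i ∈ Finset.range (k - 1), u i * (a (k - 1) ⬝ᵥ a i) := by
      conv_lhs => rw [hu]
      rw [dotsum]
      exact Finset.sum_congr rfl fun i _ => by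
        rw [dotProduct_smul, smul_eq_mul]
    have hsplit : (k - 2) + 1 = k - 1 := by omega
    rw [← hsplit, Finset.sum_range_succ] at hexp
    rw [hsplit] at hexp
    have hzero : ∑ i ∈ Finset.range (k - 2), u i * (a (k - 1) ⬝ᵥ a i) = 0 :=
      Finset.sum_eq_zero fun i hi => by
        rw [ht0 i (by have := Finset.mem_range.mp hi; omega), mul_zero]
    have h8 : -ρ = u (k - 2) * (a (k - 1) ⬝ᵥ a (k - 2)) := by
      rw [← hyp1, hexp, hzero, zero_add]
    rw [hθu]
    linear_combination (-(r (k - 2) ⬝ᵥ r (k - 2))) * h8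
  -- positivity
  have hyy : a (k - 1) = y := by rw [ha, hy]
  have hypy : y ⬝ᵥ p (k - 1) = -ρ := by rw [← hyy]; exact hyp1
  have hpy : p (k - 1) ⬝ᵥ y = -ρ := by rw [dotProduct_comm]; exact hypy
  have hD : 0 < θ * φ - ρ ^ 2 := by
    set v : Fin n → ℝ := θ • y + ρ • p (k - 1) with hv
    have hvv : v ⬝ᵥ v = θ * (θ * φ - ρ ^ 2) := by
      simp only [hv, add_dotProduct, dotProduct_add, smul_dotProduct,
        dotProduct_smul, smul_eq_mul]
      rw [← hφ, ← hθ, hypy, hpy]; ring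
    have hvnn : 0 ≤ v ⬝ᵥ v := Finset.sum_nonneg fun i _ => mul_self_nonneg _
    have hge : 0 ≤ θ * φ - ρ ^ 2 := by nlinarith [hvv, hvnn, hθpos]
    rcases hge.lt_or_eq with h | h
    · exact h
    · exfalso
      have hveq : v = 0 := dotProduct_self_eq_zero.mp (by rw [hvv, ← h, mul_zero])
      obtain ⟨u, hu⟩ := hspan (k - 1) hk1 hk1k
      set c : ℕ → ℝ := fun i => if i = k - 1 then θ else ρ * u i with hc
      have hdep : ∑ l ∈ Finset.range k, c l • a l = 0 := by
        have hsplit : (k - 1) + 1 = k := by omega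
        rw [← hsplit, Finset.sum_range_succ]
        have h6 : ∑ l ∈ Finset.range (k - 1), c l • a l = ρ • p (k - 1) := by
          rw [hu, Finset.smul_sum]
          refine Finset.sum_congr rfl fun l hl => ?_
          rw [Finset.mem_range] at hl
          have hcl : c l = ρ * u l := by
            rw [hc]; simp only [if_neg (by omega : ¬ l = k - 1)]
          rw [hcl, smul_smul]
        have h7 : c (k - 1) = θ := by rw [hc]; simp
        rw [h6, h7, hyy]
        simpa [hv, add_comm] using hveq
      have h8 := hindep c hdep (k - 1) (by omega)
      rw [hc] at h8; simp at h8
      exact hθpos.ne' h8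
  -- final assembly
  obtain ⟨u, hu⟩ := hspan (k - 1) hk1 hk1k
  obtain ⟨u0, hu0⟩ := hspan k (by omega) le_rfl
  set w : ℕ → ℝ := fun l => if l = k - 1 then θ * ρ / (θ * φ - ρ ^ 2)
    else (ρ ^ 2 / (θ * φ - ρ ^ 2)) * u l with hw
  set q : Fin n → ℝ := (ρ ^ 2 / (θ * φ - ρ ^ 2)) • p (k - 1)
    + (θ * ρ / (θ * φ - ρ ^ 2)) • y with hqdef
  have hq : q = ∑ l ∈ Finset.range k, w l • a l := by
    have hsplit : (k - 1) + 1 = k := by omega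
    rw [← hsplit, Finset.sum_range_succ]
    have h6 : ∑ l ∈ Finset.range (k - 1), w l • a l
        = (ρ ^ 2 / (θ * φ - ρ ^ 2)) • p (k - 1) := by
      rw [hu, Finset.smul_sum]
      refine Finset.sum_congr rfl fun l hl => ?_
      rw [Finset.mem_range] at hl
      have hwl : w l = (ρ ^ 2 / (θ * φ - ρ ^ 2)) * u l := by
        rw [hw]; simp only [if_neg (by omega : ¬ l = k - 1)]
      rw [hwl, smul_smul]
    have h7 : w (k - 1) = θ * ρ / (θ * φ - ρ ^ 2) := by rw [hw]; simp
    rw [h6, h7, hyy, hqdef]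
  have htk2' : a (k - 2) ⬝ᵥ y = -(ρ * (r (k - 2) ⬝ᵥ r (k - 2))) / θ := by
    rw [dotProduct_comm, ← hyy]
    rw [eq_div_iff hθpos.ne']
    linarith [htk2, mul_comm (a (k - 1) ⬝ᵥ a (k - 2)) θ]
  have hqcon : ∀ i, i < k → a i ⬝ᵥ q = r i ⬝ᵥ r (k - 1) := by
    intro i hi
    have hexp : a i ⬝ᵥ q = (ρ ^ 2 / (θ * φ - ρ ^ 2)) * (a i ⬝ᵥ p (k - 1))
        + (θ * ρ / (θ * φ - ρ ^ 2)) * (a i ⬝ᵥ y) := by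
      simp only [hqdef, dotProduct_add, dotProduct_smul, smul_eq_mul]
    rcases (by omega : i + 2 < k ∨ i = k - 2 ∨ i = k - 1) with hc | hc | hc
    · rw [hexp, hconk1 i (by omega), horth i (k - 2) (by omega) (by omega),
        dotProduct_comm (a i) y, ← hyy, ht0 i (by omega),
        horth i (k - 1) (by omega) (by omega)]
      ring
    · subst hc
      rw [hexp, hconk1 (k - 2) (by omega), htk2',
        horth (k - 2) (k - 1) (by omega) (by omega)]
      field_simp
      ring
    · subst hc
      rw [hexp, hyp1, hyy, ← hφ, ← hρ]
      field_simp
      ring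
  have hpkcon : ∀ i, i < k → a i ⬝ᵥ p k = r i ⬝ᵥ r (k - 1) :=
    fun i hi => hcon k (by omega) le_rfl i hi
  have hqpk : q = p k := by
    have hdsum : q - p k = ∑ l ∈ Finset.range k, (w l - u0 l) • a l := by
      rw [hq, hu0, ← Finset.sum_sub_distrib]
      exact Finset.sum_congr rfl fun l _ => (sub_smul _ _ _).symm
    have hdot : ∀ i, i < k → a i ⬝ᵥ (q - p k) = 0 := fun i hi => by
      rw [dotProduct_sub, hqcon i hi, hpkcon i hi, sub_self]
    have hzero : (q - p k) ⬝ᵥ (q - p k) = 0 := by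
      nth_rewrite 1 [hdsum]
      rw [sumdot]
      refine Finset.sum_eq_zero fun l hl => ?_
      rw [smul_dotProduct, hdot l (Finset.mem_range.mp hl), smul_zero]
    have h9 := dotProduct_self_eq_zero.mp hzero
    exact sub_eq_zero.mp h9
  exact ⟨hD, hqpk ▸ hqdef⟩
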